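/- Let k be a symmetric positive-semidefinite kernel on a type ι and σ > 0 a noise level. For any n, any observation points x : Fin n → ι, any new observation point w : ι, and any z : ι, the Gaussian-process posterior variance is nonnegative, bounded by the prior variance, and nonincreasing in the observations: 0 ≤ σ²(z; x⁺) ≤ σ²(z; x) ≤ k z z, where x⁺ = Fin.snoc x w is x with w appended. -/

import Mathlib

open Matrix

/-- The Gaussian-process posterior covariance `k(z, z'; x)` given observation
points `x : Fin n → ι` and noise level `σ`. -/
noncomputable def postCov {ι : Type*} (k : ι → ι → ℝ) (σ : ℝ) {n : ℕ}
    (x : Fin n → ι) (z z' : ι) : ℝ :=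
  k z z' -
    dotProduct (fun i => k (x i) z)
      (Matrix.mulVec
        ((Matrix.of (fun i j => k (x i) (x j)) + σ ^ 2 • (1 : Matrix (Fin n) (Fin n) ℝ))⁻¹)
        (fun i => k (x i) z'))

/-- The Gaussian-process posterior variance `σ²(z; x) = k(z, z; x)`. -/
noncomputable def postVar {ι : Type*} (k : ι → ι → ℝ) (σ : ℝ) {n : ℕ}
    (x : Fin n → ι) (z : ι) : ℝ :=
  postCov k σ x z z

private lemma noisePosDef {N : Type*} [Fintype N] [DecidableEq N] {K : Matrix N N ℝ}
    (hK : K.PosSemidef) {σ : ℝ} (hσ : 0 < σ) :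
    (K + σ ^ 2 • (1 : Matrix N N ℝ)).PosDef := by
  refine Matrix.PosDef.posSemidef_add hK ?_
  rw [smul_one_eq_diagonal]
  exact .diagonal fun _ => by positivity

private lemma quad_bound {N : Type*} [Fintype N] [DecidableEq N] {A : Matrix N N ℝ}
    (hA : A.PosDef) (b v : N → ℝ) :
    2 * (v ⬝ᵥ b) - v ⬝ᵥ A *ᵥ v ≤ b ⬝ᵥ A⁻¹ *ᵥ b := by
  have hInv : A * A⁻¹ = 1 := Matrix.mul_nonsing_inv _ hA.det_pos.ne'.isUnit
  have hAw : A *ᵥ (A⁻¹ *ᵥ b) = b := by rw [mulVec_mulVec, hInv, one_mulVec]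
  have hAT : Aᵀ = A := by
    have := hA.isHermitian.eq
    simpa using this
  set u := v - A⁻¹ *ᵥ b with hu
  have h0 : 0 ≤ u ⬝ᵥ A *ᵥ u := by simpa using hA.posSemidef.dotProduct_mulVec_nonneg u
  have hswap : (A⁻¹ *ᵥ b) ⬝ᵥ (A *ᵥ v) = b ⬝ᵥ v := by
    rw [dotProduct_mulVec, ← mulVec_transpose, hAT, hAw]
  have expand : u ⬝ᵥ A *ᵥ u
      = v ⬝ᵥ A *ᵥ v - v ⬝ᵥ b - b ⬝ᵥ v + (A⁻¹ *ᵥ b) ⬝ᵥ b := by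
    rw [hu, mulVec_sub, hAw, sub_dotProduct, dotProduct_sub, dotProduct_sub, hswap]
    ring
  have hcv : b ⬝ᵥ v = v ⬝ᵥ b := dotProduct_comm _ _
  have hcb : (A⁻¹ *ᵥ b) ⬝ᵥ b = b ⬝ᵥ A⁻¹ *ᵥ b := dotProduct_comm _ _
  linarith [h0, expand]

private lemma snoc_quad {ι : Type*} (k : ι → ι → ℝ)
    (hsymm : ∀ z z', k z z' = k z' z)
    (m : ℕ) (y : Fin m → ι) (z : ι) (u : Fin m → ℝ) :
    (Fin.snoc (fun i => -(u i)) 1 : Fin (m+1) → ℝ) ⬝ᵥ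
      (Matrix.of (fun i j => k ((Fin.snoc y z : Fin (m+1) → ι) i)
          ((Fin.snoc y z : Fin (m+1) → ι) j))
        : Matrix (Fin (m+1)) (Fin (m+1)) ℝ) *ᵥ (Fin.snoc (fun i => -(u i)) 1)
    = u ⬝ᵥ (Matrix.of (fun i j => k (y i) (y j)) : Matrix (Fin m) (Fin m) ℝ) *ᵥ u
        - 2 * (u ⬝ᵥ fun i => k (y i) z) + k z z := by
  simp only [dotProduct, mulVec, Matrix.of_apply, Fin.sum_univ_castSucc,
    Fin.snoc_castSucc, Fin.snoc_last]
  rw [Finset.sum_congr rfl (fun j (_ : j ∈ Finset.univ) => by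
    rw [hsymm z (y j)] : ∀ j ∈ Finset.univ, k z (y j) * -u j = k (y j) z * -u j)]
  rw [Finset.sum_congr rfl (fun j (_ : j ∈ Finset.univ) =>
    mul_comm (k (y j) z) (-u j))]
  simp only [mul_add, add_mul, mul_one, one_mul, mul_neg, neg_mul, neg_neg,
    Finset.sum_add_distrib, Finset.sum_neg_distrib]
  ring

theorem posterior_variance_monotone
    {ι : Type*} (k : ι → ι → ℝ) (σ : ℝ)
    (hσ : 0 < σ)
    (hsymm : ∀ z z', k z z' = k z' z)
    (hpsd : ∀ (n : ℕ) (x : Fin n → ι),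
      (Matrix.of (fun i j => k (x i) (x j)) : Matrix (Fin n) (Fin n) ℝ).PosSemidef)
    (n : ℕ) (x : Fin n → ι) (w : ι) (z : ι) :
    0 ≤ postVar k σ (Fin.snoc x w) z ∧
      postVar k σ (Fin.snoc x w) z ≤ postVar k σ x z ∧
      postVar k σ x z ≤ k z z := by
  have hPD : ∀ (m : ℕ) (y : Fin m → ι),
      (Matrix.of (fun i j => k (y i) (y j))
        + σ ^ 2 • (1 : Matrix (Fin m) (Fin m) ℝ)).PosDef :=
    fun m y => noisePosDef (hpsd m y) hσ
  -- the quadratic form with the inverse matrix, for any point set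
  have hqnn : ∀ (m : ℕ) (y : Fin m → ι),
      0 ≤ (fun i => k (y i) z) ⬝ᵥ
        ((Matrix.of (fun i j => k (y i) (y j))
          + σ ^ 2 • (1 : Matrix (Fin m) (Fin m) ℝ))⁻¹ *ᵥ (fun i => k (y i) z)) :=
    fun m y => by simpa using (hPD m y).inv.posSemidef.dotProduct_mulVec_nonneg (fun i => k (y i) z)
  have hval : ∀ (m : ℕ) (y : Fin m → ι), postVar k σ y z
      = k z z - (fun i => k (y i) z) ⬝ᵥ
        ((Matrix.of (fun i j => k (y i) (y j))
          + σ ^ 2 • (1 : Matrix (Fin m) (Fin m) ℝ))⁻¹ *ᵥ (fun i => k (y i) z)) :=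
    fun m y => rfl
  -- nonnegativity of the posterior variance, for any point set
  have hnn : ∀ (m : ℕ) (y : Fin m → ι), 0 ≤ postVar k σ y z := by
    intro m y
    set K : Matrix (Fin m) (Fin m) ℝ := Matrix.of (fun i j => k (y i) (y j)) with hK
    set A : Matrix (Fin m) (Fin m) ℝ := K + σ ^ 2 • 1 with hA
    set b : Fin m → ℝ := fun i => k (y i) z with hb
    set u : Fin m → ℝ := A⁻¹ *ᵥ b with husub
    have hApd : A.PosDef := hPD m y
    have hAw : A *ᵥ u = b := by
      rw [husub, mulVec_mulVec, Matrix.mul_nonsing_inv _ hApd.det_pos.ne'.isUnit, one_mulVec]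
    have h0 : 0 ≤ (Fin.snoc (fun i => -(u i)) 1 : Fin (m+1) → ℝ) ⬝ᵥ
        (Matrix.of (fun i j => k ((Fin.snoc y z : Fin (m+1) → ι) i)
          ((Fin.snoc y z : Fin (m+1) → ι) j))
          : Matrix (Fin (m+1)) (Fin (m+1)) ℝ) *ᵥ (Fin.snoc (fun i => -(u i)) 1) := by
      simpa using (hpsd (m+1) (Fin.snoc y z)).dotProduct_mulVec_nonneg (Fin.snoc (fun i => -(u i)) 1)
    rw [snoc_quad k hsymm m y z u] at h0
    have hKA : u ⬝ᵥ A *ᵥ u = u ⬝ᵥ K *ᵥ u + σ ^ 2 * (u ⬝ᵥ u) := by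
      rw [hA, add_mulVec, dotProduct_add, smul_mulVec, one_mulVec,
        dotProduct_smul, smul_eq_mul]
    have huAu : u ⬝ᵥ A *ᵥ u = u ⬝ᵥ b := by rw [hAw]
    have hq : b ⬝ᵥ A⁻¹ *ᵥ b = u ⬝ᵥ b := by rw [← husub]; exact dotProduct_comm _ _
    have huu : 0 ≤ u ⬝ᵥ u := Finset.sum_nonneg fun i _ => mul_self_nonneg (u i)
    rw [hval m y, ← hb, ← hK, ← hA, hq]
    nlinarith [sq_nonneg σ]
  refine ⟨hnn (n+1) (Fin.snoc x w), ?_, ?_⟩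
  · -- monotonicity
    set K : Matrix (Fin n) (Fin n) ℝ := Matrix.of (fun i j => k (x i) (x j)) with hK
    set A : Matrix (Fin n) (Fin n) ℝ := K + σ ^ 2 • 1 with hA
    set b : Fin n → ℝ := fun i => k (x i) z with hb
    set u : Fin n → ℝ := A⁻¹ *ᵥ b with husub
    have hApd : A.PosDef := hPD n x
    have hAw : A *ᵥ u = b := by
      rw [husub, mulVec_mulVec, Matrix.mul_nonsing_inv _ hApd.det_pos.ne'.isUnit, one_mulVec]
    set bp : Fin (n+1) → ℝ := fun i => k ((Fin.snoc x w : Fin (n+1) → ι) i) z with hbp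
    set Ap : Matrix (Fin (n+1)) (Fin (n+1)) ℝ :=
      Matrix.of (fun i j => k ((Fin.snoc x w : Fin (n+1) → ι) i)
        ((Fin.snoc x w : Fin (n+1) → ι) j)) + σ ^ 2 • 1 with hAp
    have hbound := quad_bound (hPD (n+1) (Fin.snoc x w)) bp (Fin.snoc u 0)
    have h1 : (Fin.snoc u 0 : Fin (n+1) → ℝ) ⬝ᵥ bp = u ⬝ᵥ b := by
      simp only [hbp, hb, dotProduct, Fin.sum_univ_castSucc, Fin.snoc_castSucc,
        Fin.snoc_last, zero_mul, add_zero]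
    have h2 : (Fin.snoc u 0 : Fin (n+1) → ℝ) ⬝ᵥ Ap *ᵥ (Fin.snoc u 0) = u ⬝ᵥ A *ᵥ u := by
      simp only [hAp, hA, hK, dotProduct, mulVec, Matrix.add_apply, Matrix.smul_apply,
        Matrix.one_apply, Matrix.of_apply, Fin.sum_univ_castSucc, Fin.snoc_castSucc,
        Fin.snoc_last, smul_eq_mul, mul_zero, zero_mul, add_zero, zero_add,
        Fin.castSucc_inj, mul_ite, mul_one]
    have huAu : u ⬝ᵥ A *ᵥ u = u ⬝ᵥ b := by rw [hAw]
    have hq : b ⬝ᵥ A⁻¹ *ᵥ b = u ⬝ᵥ b := by rw [← husub]; exact dotProduct_comm _ _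
    rw [h1, h2, huAu] at hbound
    rw [hval (n+1) (Fin.snoc x w), hval n x, ← hb, ← hK, ← hA, hq, ← hbp]
    have : bp ⬝ᵥ Ap⁻¹ *ᵥ bp = bp ⬝ᵥ (Matrix.of (fun i j => k ((Fin.snoc x w : Fin (n+1) → ι) i)
        ((Fin.snoc x w : Fin (n+1) → ι) j)) + σ ^ 2 • 1)⁻¹ *ᵥ bp := by rw [← hAp]
    rw [← this]
    linarith
  · -- bounded by the prior variance
    rw [hval n x]
    linarith [hqnn n x]
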